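/- Let A, B > 0, α, β > 0, D_inf ≥ 0, E, ℓ be real numbers with ℓ > E, and set D_min = (B/(ℓ − E))^(1/β). Let D* be the unique positive solution of 0 = (E − ℓ) + (β·B/α + B)·D^(−β) + (D_inf·β·B/(3·α))·D^(−β−1). Then D* > D_min, and D* is the unique global minimizer of C(D) = (6·D + 2·D_inf)·(A/(ℓ − E − B·D^(−β)))^(1/α) on (D_min, ∞). -/

import Mathlib

open Real Set

private lemma rpow_anti {a b e : ℝ} (ha : 0 < a) (hab : a < b) (he : 0 < e) :
    b ^ (-e) < a ^ (-e) := by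
  rw [Real.rpow_neg ha.le, Real.rpow_neg (ha.trans hab).le]
  exact inv_strictAnti₀ (Real.rpow_pos_of_pos ha e) (Real.rpow_lt_rpow ha.le hab he)

/-- The unique positive solution `D*` of Eq. 11 lies above `D_min` and is the unique
global minimizer of the total compute `C(D)` on `(D_min, ∞)`. -/
theorem eq11_solution_is_global_min (A B α β Dinf E ℓ Dstar : ℝ)
    (hA : 0 < A) (hB : 0 < B) (hα : 0 < α) (hβ : 0 < β) (hDinf : 0 ≤ Dinf)
    (hℓ : E < ℓ)
    (hDstarpos : 0 < Dstar)
    (hDstar : 0 = (E - ℓ) + (β * B / α + B) * Dstar ^ (-β)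
        + (Dinf * β * B / (3 * α)) * Dstar ^ (-β - 1)) :
    (B / (ℓ - E)) ^ (1 / β) < Dstar ∧
    ∀ D : ℝ, (B / (ℓ - E)) ^ (1 / β) < D → D ≠ Dstar →
      (6 * Dstar + 2 * Dinf) * (A / (ℓ - E - B * Dstar ^ (-β))) ^ (1 / α)
        < (6 * D + 2 * Dinf) * (A / (ℓ - E - B * D ^ (-β))) ^ (1 / α) := by
  have hLE : 0 < ℓ - E := sub_pos.2 hℓ
  set Dmin : ℝ := (B / (ℓ - E)) ^ (1 / β) with hDmin
  set G : ℝ → ℝ := fun D => (E - ℓ) + (β * B / α + B) * D ^ (-β)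
      + (Dinf * β * B / (3 * α)) * D ^ (-β - 1) with hGdef
  set F : ℝ → ℝ := fun D => (6 * D + 2 * Dinf) * (A / (ℓ - E - B * D ^ (-β))) ^ (1 / α)
    with hFdef
  have hc1 : 0 < β * B / α + B := by positivity
  have hc2 : 0 ≤ Dinf * β * B / (3 * α) := by positivity
  -- G is strictly antitone on (0, ∞)
  have hGanti : StrictAntiOn G (Ioi 0) := by
    intro a ha b hb hab
    simp only [mem_Ioi] at ha hb
    have h1 : b ^ (-β) < a ^ (-β) := rpow_anti ha hab hβ
    have h2 : b ^ (-β - 1) ≤ a ^ (-β - 1) := by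
      have : -β - 1 = -(β + 1) := by ring
      rw [this]
      exact (rpow_anti ha hab (by linarith)).le
    have := mul_lt_mul_of_pos_left h1 hc1
    have := mul_le_mul_of_nonneg_left h2 hc2
    simp only [hGdef]
    linarith
  have hDminpos : 0 < Dmin := Real.rpow_pos_of_pos (by positivity) _
  have hDminpow : Dmin ^ (-β) = (ℓ - E) / B := by
    have hbase : (0:ℝ) ≤ B / (ℓ - E) := by positivity
    rw [hDmin, ← Real.rpow_mul hbase]
    have he : 1 / β * (-β) = -1 := by field_simp
    rw [he, Real.rpow_neg_one, inv_div]
  -- h positivity on (Dmin, ∞)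
  have hhpos : ∀ x : ℝ, Dmin < x → 0 < ℓ - E - B * x ^ (-β) := by
    intro x hx
    have h1 : x ^ (-β) < Dmin ^ (-β) := rpow_anti hDminpos hx hβ
    rw [hDminpow] at h1
    have := mul_lt_mul_of_pos_left h1 hB
    rw [mul_div_cancel₀ _ hB.ne'] at this
    linarith
  have hGDmin : 0 < G Dmin := by
    have hw : 0 < Dmin ^ (-β - 1) := Real.rpow_pos_of_pos hDminpos _
    have h2 : 0 ≤ Dinf * β * B / (3 * α) * Dmin ^ (-β - 1) := mul_nonneg hc2 hw.le
    have h3 : (β * B / α + B) * ((ℓ - E) / B) = β * (ℓ - E) / α + (ℓ - E) := by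
      field_simp
    have h4 : 0 < β * (ℓ - E) / α := by positivity
    simp only [hGdef, hDminpow, h3]
    linarith
  have hGstar : G Dstar = 0 := hDstar.symm
  -- Dmin < Dstar
  have hmain : Dmin < Dstar := by
    by_contra hcon
    push_neg at hcon
    have : G Dmin ≤ G Dstar := by
      rcases eq_or_lt_of_le hcon with h | h
      · rw [h]
      · exact (hGanti (mem_Ioi.2 hDstarpos) (mem_Ioi.2 hDminpos) h).le
    rw [hGstar] at this
    linarith
  refine ⟨hmain, ?_⟩
  -- derivative of F
  have hderiv : ∀ x : ℝ, Dmin < x →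
      HasDerivAt F (-(6 * (A / (ℓ - E - B * x ^ (-β))) ^ (1 / α)
        / (ℓ - E - B * x ^ (-β))) * G x) x := by
    intro x hx
    have hx0 : 0 < x := hDminpos.trans hx
    have hh : 0 < ℓ - E - B * x ^ (-β) := hhpos x hx
    have hu : 0 < A / (ℓ - E - B * x ^ (-β)) := div_pos hA hh
    have d1 : HasDerivAt (fun D : ℝ => D ^ (-β)) (-β * x ^ (-β - 1)) x :=
      Real.hasDerivAt_rpow_const (Or.inl hx0.ne')
    have d2 : HasDerivAt (fun D : ℝ => ℓ - E - B * D ^ (-β))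
        (-(B * (-β * x ^ (-β - 1)))) x := (d1.const_mul B).const_sub (ℓ - E)
    have d3 : HasDerivAt (fun D : ℝ => A / (ℓ - E - B * D ^ (-β)))
        ((0 * (ℓ - E - B * x ^ (-β)) - A * -(B * (-β * x ^ (-β - 1))))
          / (ℓ - E - B * x ^ (-β)) ^ 2) x :=
      (hasDerivAt_const x A).div d2 hh.ne'
    have d4 := d3.rpow_const (p := 1 / α) (Or.inl hu.ne')
    have d5 : HasDerivAt (fun D : ℝ => 6 * D + 2 * Dinf) 6 x := by
      simpa using ((hasDerivAt_id x).const_mul 6).add_const (2 * Dinf)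
    have d6 := d5.mul d4
    convert d6 using 1
    · rfl
    · rfl
    · rfl
    have hvw : x ^ (-β) = x ^ (-β - 1) * x := by
      rw [← Real.rpow_add_one hx0.ne' (-β - 1)]
      ring_nf
    have hu1 : (A / (ℓ - E - B * x ^ (-β))) ^ (1 / α - 1)
        = (A / (ℓ - E - B * x ^ (-β))) ^ (1 / α) * (ℓ - E - B * x ^ (-β)) / A := by
      rw [Real.rpow_sub hu, Real.rpow_one, div_div_eq_mul_div]
    rw [hu1]
    simp only [hGdef]
    have hh' : 0 < ℓ - E - B * (x ^ (-β - 1) * x) := by rw [← hvw]; exact hh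
    set t := (A / (ℓ - E - B * x ^ (-β))) ^ (1 / α) with ht
    rw [hvw]
    set hd := ℓ - E - B * (x ^ (-β - 1) * x) with hhd
    field_simp
    ring
  intro D hD hne
  have hGpos : ∀ x : ℝ, 0 < x → x < Dstar → 0 < G x := fun x hx hlt => by
    have := hGanti (mem_Ioi.2 hx) (mem_Ioi.2 hDstarpos) hlt
    rw [hGstar] at this; linarith
  have hGneg : ∀ x : ℝ, Dstar < x → G x < 0 := fun x hlt => by
    have := hGanti (mem_Ioi.2 hDstarpos) (mem_Ioi.2 (hDstarpos.trans hlt)) hlt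
    rw [hGstar] at this; linarith
  rcases lt_or_gt_of_ne hne with hlt | hgt
  · -- D < Dstar : F strictly antitone on [D, Dstar]
    have hanti : StrictAntiOn F (Icc D Dstar) := by
      apply strictAntiOn_of_deriv_neg (convex_Icc D Dstar)
      · exact fun x hx => (hderiv x (hD.trans_le hx.1)).continuousAt.continuousWithinAt
      · intro x hx
        rw [interior_Icc] at hx
        have hxm : Dmin < x := hD.trans hx.1
        rw [(hderiv x hxm).deriv]
        have hh := hhpos x hxm
        have ht : 0 < (A / (ℓ - E - B * x ^ (-β))) ^ (1 / α) :=
          Real.rpow_pos_of_pos (div_pos hA hh) _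
        have hg := hGpos x (hDminpos.trans hxm) hx.2
        have hP : 0 < 6 * (A / (ℓ - E - B * x ^ (-β))) ^ (1 / α) / (ℓ - E - B * x ^ (-β)) :=
          by positivity
        nlinarith [mul_pos hP hg]
    exact hanti (left_mem_Icc.2 hlt.le) (right_mem_Icc.2 hlt.le) hlt
  · -- Dstar < D : F strictly monotone on [Dstar, D]
    have hmono : StrictMonoOn F (Icc Dstar D) := by
      apply strictMonoOn_of_deriv_pos (convex_Icc Dstar D)
      · exact fun x hx => (hderiv x (hmain.trans_le hx.1)).continuousAt.continuousWithinAt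
      · intro x hx
        rw [interior_Icc] at hx
        have hxm : Dmin < x := hmain.trans hx.1
        rw [(hderiv x hxm).deriv]
        have hh := hhpos x hxm
        have ht : 0 < (A / (ℓ - E - B * x ^ (-β))) ^ (1 / α) :=
          Real.rpow_pos_of_pos (div_pos hA hh) _
        have hg := hGneg x hx.1
        have hP : 0 < 6 * (A / (ℓ - E - B * x ^ (-β))) ^ (1 / α) / (ℓ - E - B * x ^ (-β)) :=
          by positivity
        nlinarith [mul_pos hP (neg_pos.2 hg)]
    exact hmono (left_mem_Icc.2 hgt.le) (right_mem_Icc.2 hgt.le) hgt
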